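/- Let n ≥ 1, let M = (I₄ + 2|ψ⁻⟩⟨ψ⁻|)/3 on ℂ²_{A_i} ⊗ ℂ²_{B_i}, and let Π = M^{⊗n} acting on ⊗_{i=1}^n (ℂ²_{A_i} ⊗ ℂ²_{B_i}). Then 0 ⪯ Π ⪯ I, Tr(Π (|ψ⁻⟩⟨ψ⁻|)^{⊗n}) = 1, and Tr(Π σ) ≤ (2/3)^n for every state σ on ⊗_{i=1}^n (ℂ²_{A_i} ⊗ ℂ²_{B_i}) whose image under the canonical regrouping isomorphism onto ((ℂ²)^{⊗n})_A ⊗ ((ℂ²)^{⊗n})_B (grouping all A qubits together and all B qubits together) is separable across the cut A:B. Consequently, ‖(|ψ⁻⟩⟨ψ⁻|)^{⊗n} − σ‖₁ ≥ 2(1 − (2/3)^n) for every such σ. -/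

import Mathlib

open scoped Kronecker ComplexOrder
open Matrix

/-- The trace norm (Schatten 1-norm) of a complex matrix: `Tr √(Xᴴ X)`. -/
noncomputable def traceNorm {n : Type*} [Fintype n] [DecidableEq n] (X : Matrix n n ℂ) : ℝ :=
  (((Matrix.posSemidef_conjTranspose_mul_self X).1.eigenvectorUnitary.1 *
      diagonal ((fun r : ℝ => (r : ℂ)) ∘ (Real.sqrt ·) ∘ (Matrix.posSemidef_conjTranspose_mul_self X).1.eigenvalues) *
      (star (Matrix.posSemidef_conjTranspose_mul_self X).1.eigenvectorUnitary : Matrix n n ℂ)).trace).re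

/-- A quantum state: a positive semidefinite matrix with unit trace. -/
def IsState {n : Type*} [Fintype n] (ρ : Matrix n n ℂ) : Prop :=
  ρ.PosSemidef ∧ ρ.trace = 1

/-- The outer product `|v⟩⟨v|`. -/
def outer {n : Type*} (v : n → ℂ) : Matrix n n ℂ :=
  Matrix.of fun i j => v i * star (v j)

/-- A unit vector. -/
def IsUnitVec {n : Type*} [Fintype n] (v : n → ℂ) : Prop :=
  ∑ i, star (v i) * v i = 1

/-- A bipartite separable state: a finite convex combination of tensor products of states. -/
def SeparableState {a b : Type*} [Fintype a] [Fintype b]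
    (σ : Matrix (a × b) (a × b) ℂ) : Prop :=
  ∃ (m : ℕ) (p : Fin m → ℝ) (σA : Fin m → Matrix a a ℂ) (σB : Fin m → Matrix b b ℂ),
    (∀ y, 0 ≤ p y) ∧ (∑ y, p y = 1) ∧ (∀ y, IsState (σA y)) ∧ (∀ y, IsState (σB y)) ∧
    σ = ∑ y, (p y : ℂ) • (σA y ⊗ₖ σB y)

/-- A maximally entangled unit vector `(1/√d) Σ_k |e_k⟩ ⊗ |f_k⟩` built from two
orthonormal bases `e`, `f` of `ℂ^d`. -/
def MaxEntangled {d : ℕ} (φ : Fin d × Fin d → ℂ) : Prop :=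
  ∃ e f : Fin d → Fin d → ℂ,
    (∀ i j, ∑ x, star (e i x) * e j x = if i = j then (1 : ℂ) else 0) ∧
    (∀ i j, ∑ x, star (f i x) * f j x = if i = j then (1 : ℂ) else 0) ∧
    ∀ x, φ x = ((Real.sqrt d : ℂ))⁻¹ * ∑ k, e k x.1 * f k x.2

/-- The singlet `|ψ⁻⟩ = (|0⟩⊗|1⟩ − |1⟩⊗|0⟩)/√2` in `ℂ² ⊗ ℂ²`. -/
noncomputable def singlet : Fin 2 × Fin 2 → ℂ := fun x =>
  if x = ((0 : Fin 2), (1 : Fin 2)) then ((Real.sqrt 2 : ℂ))⁻¹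
  else if x = ((1 : Fin 2), (0 : Fin 2)) then -((Real.sqrt 2 : ℂ))⁻¹
  else 0

/-- The operator `M = (I₄ + 2|ψ⁻⟩⟨ψ⁻|)/3` on `ℂ² ⊗ ℂ²`. -/
noncomputable def pauliTestOp : Matrix (Fin 2 × Fin 2) (Fin 2 × Fin 2) ℂ :=
  ((3 : ℂ))⁻¹ • ((1 : Matrix (Fin 2 × Fin 2) (Fin 2 × Fin 2) ℂ) + (2 : ℂ) • outer singlet)

/-- The `n`-fold tensor (Kronecker) power of a square matrix, acting on `n`-fold
tensor product indexed by functions `Fin n → α`. -/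
def tensorPow {α : Type*} (n : ℕ) (A : Matrix α α ℂ) :
    Matrix (Fin n → α) (Fin n → α) ℂ :=
  Matrix.of fun x y => ∏ i, A (x i) (y i)

/-- The canonical regrouping isomorphism sending an operator on
`⊗_{i=1}^n (ℂ²_{A_i} ⊗ ℂ²_{B_i})` to an operator on `((ℂ²)^{⊗n})_A ⊗ ((ℂ²)^{⊗n})_B`,
grouping all `A` qubits together and all `B` qubits together. -/
def regroup {n : ℕ} (σ : Matrix (Fin n → Fin 2 × Fin 2) (Fin n → Fin 2 × Fin 2) ℂ) :
    Matrix ((Fin n → Fin 2) × (Fin n → Fin 2)) ((Fin n → Fin 2) × (Fin n → Fin 2)) ℂ :=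
  Matrix.of fun x y =>
    σ (fun i => (x.1 i, x.2 i)) (fun i => (y.1 i, y.2 i))

set_option linter.unusedSectionVars false


set_option linter.unusedSectionVars false

open scoped MatrixOrder

section aux
variable {a b : Type*} [Fintype a] [Fintype b] [DecidableEq a] [DecidableEq b]

lemma kron_conjTranspose (A : Matrix a a ℂ) (B : Matrix b b ℂ) :
    (A ⊗ₖ B)ᴴ = Aᴴ ⊗ₖ Bᴴ := by
  ext ⟨i,j⟩ ⟨k,l⟩
  simp [conjTranspose_apply, kroneckerMap_apply]

lemma psd_kron {A : Matrix a a ℂ} {B : Matrix b b ℂ}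
    (hA : A.PosSemidef) (hB : B.PosSemidef) : (A ⊗ₖ B).PosSemidef := by
  have h : A ⊗ₖ B = (CFC.sqrt A ⊗ₖ CFC.sqrt B)ᴴ * (CFC.sqrt A ⊗ₖ CFC.sqrt B) := by
    rw [kron_conjTranspose, (CFC.sqrt_nonneg A).posSemidef.1.eq,
      (CFC.sqrt_nonneg B).posSemidef.1.eq,
      ← mul_kronecker_mul, CFC.sqrt_mul_sqrt_self A hA.nonneg, CFC.sqrt_mul_sqrt_self B hB.nonneg]
  rw [h]
  exact posSemidef_conjTranspose_mul_self _

lemma psd_csmul {A : Matrix a a ℂ} (hA : A.PosSemidef) {c : ℂ} (hc : 0 ≤ c) :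
    (c • A).PosSemidef := by
  have hcc : star c = c := by
    rw [Complex.star_def, Complex.conj_eq_iff_im]
    exact (Complex.nonneg_iff.mp hc).2.symm
  refine posSemidef_iff_dotProduct_mulVec.mpr ⟨?_, fun x => ?_⟩
  · unfold Matrix.IsHermitian
    rw [conjTranspose_smul, hcc, hA.1.eq]
  · rw [smul_mulVec, dotProduct_smul, smul_eq_mul]
    exact mul_nonneg hc (hA.dotProduct_mulVec_nonneg x)

lemma psd_diag_nonneg {A : Matrix a a ℂ} (hA : A.PosSemidef) (i : a) :
    0 ≤ A i i := by
  exact hA.diag_nonneg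

lemma psd_trace_nonneg {A : Matrix a a ℂ} (hA : A.PosSemidef) :
    0 ≤ A.trace :=
  Finset.sum_nonneg fun i _ => psd_diag_nonneg hA i

lemma psd_trace_mul_nonneg {A B : Matrix a a ℂ}
    (hA : A.PosSemidef) (hB : B.PosSemidef) : 0 ≤ (A * B).trace := by
  have h1 : (A * B).trace = (CFC.sqrt A * B * CFC.sqrt A).trace := by
    conv_lhs => rw [← CFC.sqrt_mul_sqrt_self A hA.nonneg]
    rw [mul_assoc, trace_mul_comm, mul_assoc]
  rw [h1]
  have h2 := hB.conjTranspose_mul_mul_same (CFC.sqrt A)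
  rw [(CFC.sqrt_nonneg A).posSemidef.1.eq] at h2
  exact psd_trace_nonneg h2
end aux

def finSplit (n : ℕ) (α : Type*) : (Fin (n+1) → α) ≃ α × (Fin n → α) where
  toFun x := (x 0, fun i => x i.succ)
  invFun p := Fin.cons p.1 p.2
  left_inv x := by
    funext i
    cases i using Fin.cases <;> simp
  right_inv p := by simp

variable {α : Type*} [Fintype α] [DecidableEq α]

lemma tensorPow_zero (A : Matrix α α ℂ) : tensorPow 0 A = 1 := by
  ext x y
  have : x = y := Subsingleton.elim x y
  subst this
  simp [tensorPow, one_apply]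

lemma tensorPow_succ (n : ℕ) (A : Matrix α α ℂ) :
    tensorPow (n+1) A = (A ⊗ₖ tensorPow n A).submatrix (finSplit n α) (finSplit n α) := by
  ext x y
  simp only [tensorPow, submatrix_apply, kroneckerMap_apply, Matrix.of_apply, finSplit,
    Equiv.coe_fn_mk]
  rw [Fin.prod_univ_succ]

lemma tensorPow_psd {A : Matrix α α ℂ} (hA : A.PosSemidef) (n : ℕ) :
    (tensorPow n A).PosSemidef := by
  induction n with
  | zero => rw [tensorPow_zero]; exact Matrix.PosSemidef.one
  | succ n ih =>
      rw [tensorPow_succ]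
      exact (psd_kron hA ih).submatrix _

lemma one_sub_tensorPow_psd {A : Matrix α α ℂ} (hA : A.PosSemidef)
    (h1 : ((1 : Matrix α α ℂ) - A).PosSemidef) (n : ℕ) :
    ((1 : Matrix (Fin n → α) (Fin n → α) ℂ) - tensorPow n A).PosSemidef := by
  induction n with
  | zero =>
      rw [tensorPow_zero, sub_self]
      exact Matrix.PosSemidef.zero
  | succ n ih =>
      rw [tensorPow_succ]
      have key : (1 : Matrix (Fin (n+1) → α) (Fin (n+1) → α) ℂ)
          = ((1 : Matrix (α × (Fin n → α)) _ ℂ)).submatrix (finSplit n α) (finSplit n α) := by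
        rw [submatrix_one_equiv]
      rw [key]
      have hsub : (1 : Matrix (α × (Fin n → α)) (α × (Fin n → α)) ℂ).submatrix
            (finSplit n α) (finSplit n α)
          - (A ⊗ₖ tensorPow n A).submatrix (finSplit n α) (finSplit n α)
          = ((1 : Matrix (α × (Fin n → α)) (α × (Fin n → α)) ℂ)
              - A ⊗ₖ tensorPow n A).submatrix (finSplit n α) (finSplit n α) := rfl
      rw [hsub]
      refine Matrix.PosSemidef.submatrix ?_ _
      have hid : (1 : Matrix (α × (Fin n → α)) (α × (Fin n → α)) ℂ) - A ⊗ₖ tensorPow n A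
          = ((1 : Matrix α α ℂ) - A) ⊗ₖ (1 : Matrix (Fin n → α) (Fin n → α) ℂ)
            + A ⊗ₖ ((1 : Matrix (Fin n → α) (Fin n → α) ℂ) - tensorPow n A) := by
        rw [← Matrix.one_kronecker_one (α := ℂ) (m := α) (n := Fin n → α)]
        ext ⟨i,j⟩ ⟨k,l⟩
        simp only [Matrix.sub_apply, Matrix.add_apply, kroneckerMap_apply]
        ring
      rw [hid]
      exact Matrix.PosSemidef.add (psd_kron h1 Matrix.PosSemidef.one)
        (psd_kron hA ih)

variable {β : Type*} [Fintype β] [DecidableEq β]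

lemma trace_submatrix_equiv' {γ : Type*} [Fintype γ] [DecidableEq γ]
    (e : β ≃ γ) (A : Matrix γ γ ℂ) : (A.submatrix e e).trace = A.trace :=
  Fintype.sum_equiv e _ _ (fun _ => rfl)

lemma trace_tensorPow_mul (A B : Matrix β β ℂ) (n : ℕ) :
    (tensorPow n A * tensorPow n B).trace = ((A * B).trace)^n := by
  induction n with
  | zero =>
      rw [tensorPow_zero, tensorPow_zero, one_mul, pow_zero]
      simp [Matrix.trace_one]
  | succ n ih =>
      rw [tensorPow_succ, tensorPow_succ, submatrix_mul_equiv,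
        trace_submatrix_equiv', ← mul_kronecker_mul, trace_kronecker, ih, pow_succ']

lemma trace_tensorPow (A : Matrix β β ℂ) (n : ℕ) :
    (tensorPow n A).trace = (A.trace)^n := by
  induction n with
  | zero =>
      rw [tensorPow_zero, pow_zero]
      simp [Matrix.trace_one]
  | succ n ih =>
      rw [tensorPow_succ, trace_submatrix_equiv', trace_kronecker, ih, pow_succ']

lemma tensorPow_smul (c : ℂ) (A : Matrix β β ℂ) (n : ℕ) :
    tensorPow n (c • A) = c^n • tensorPow n A := by
  ext x y
  simp only [tensorPow, Matrix.of_apply, Matrix.smul_apply, Pi.smul_apply, smul_eq_mul,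
    Finset.prod_mul_distrib, Finset.prod_const, Finset.card_univ, Fintype.card_fin]


lemma sqrt2_inv_sq : ((Real.sqrt 2 : ℂ))⁻¹ * ((Real.sqrt 2 : ℂ))⁻¹ = 2⁻¹ := by
  have h : (Real.sqrt 2 : ℂ) * (Real.sqrt 2 : ℂ) = 2 := by
    norm_cast
    rw [Real.mul_self_sqrt] <;> norm_num
  rw [← mul_inv, h]

lemma star_sqrt2_inv : star ((Real.sqrt 2 : ℂ))⁻¹ = ((Real.sqrt 2 : ℂ))⁻¹ := by
  rw [star_inv₀, Complex.star_def, Complex.conj_ofReal]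

section outer
variable {n : Type*} [Fintype n] [DecidableEq n]

lemma outer_hermitian (v : n → ℂ) : (outer v).IsHermitian := by
  unfold Matrix.IsHermitian
  ext i j
  simp [outer, conjTranspose_apply, mul_comm]

lemma outer_psd (v : n → ℂ) : (outer v).PosSemidef := by
  have h : outer v = (Matrix.of fun (_ : Unit) (i : n) => star (v i))ᴴ
      * (Matrix.of fun (_ : Unit) (i : n) => star (v i)) := by
    ext i j
    simp [outer, Matrix.mul_apply, conjTranspose_apply]
  rw [h]
  exact posSemidef_conjTranspose_mul_self _

lemma outer_mul_self {v : n → ℂ} (hv : IsUnitVec v) : outer v * outer v = outer v := by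
  ext i j
  simp only [Matrix.mul_apply, outer, Matrix.of_apply]
  calc ∑ k, v i * star (v k) * (v k * star (v j))
      = (∑ k, star (v k) * v k) * (v i * star (v j)) := by
        rw [Finset.sum_mul]; congr 1; ext k; ring
    _ = v i * star (v j) := by rw [hv, one_mul]

lemma trace_outer {v : n → ℂ} (hv : IsUnitVec v) : (outer v).trace = 1 := by
  unfold Matrix.trace
  calc ∑ i, (outer v).diag i = ∑ i, star (v i) * v i := by
        congr 1; ext i; simp [outer, Matrix.diag, mul_comm]
    _ = 1 := hv

lemma one_sub_outer_psd {v : n → ℂ} (hv : IsUnitVec v) :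
    ((1 : Matrix n n ℂ) - outer v).PosSemidef := by
  have h : (1 : Matrix n n ℂ) - outer v
      = ((1 : Matrix n n ℂ) - outer v)ᴴ * ((1 : Matrix n n ℂ) - outer v) := by
    have hh : ((1 : Matrix n n ℂ) - outer v)ᴴ = (1 : Matrix n n ℂ) - outer v := by
      rw [conjTranspose_sub, conjTranspose_one, (outer_hermitian v).eq]
    rw [hh, sub_mul, one_mul, mul_sub, mul_one, outer_mul_self hv]
    simp
  rw [h]
  exact posSemidef_conjTranspose_mul_self _
end outer

lemma singlet_unit : IsUnitVec singlet := by
  rw [IsUnitVec, Fintype.sum_prod_type]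
  simp [singlet, Fin.sum_univ_succ, Prod.ext_iff, star_sqrt2_inv, sqrt2_inv_sq]
  norm_num

noncomputable def mePhi : Fin 2 × Fin 2 → ℂ := fun x =>
  if x.1 = x.2 then ((Real.sqrt 2 : ℂ))⁻¹ else 0

lemma mePhi_unit : IsUnitVec mePhi := by
  rw [IsUnitVec, Fintype.sum_prod_type]
  simp [mePhi, Fin.sum_univ_succ, star_sqrt2_inv, sqrt2_inv_sq]

def PT1 (A : Matrix (Fin 2 × Fin 2) (Fin 2 × Fin 2) ℂ) :
    Matrix (Fin 2 × Fin 2) (Fin 2 × Fin 2) ℂ :=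
  Matrix.of fun x y => A (x.1, y.2) (y.1, x.2)

lemma PT1_pauliTestOp :
    PT1 pauliTestOp
      = (2/3 : ℂ) • ((1 : Matrix (Fin 2 × Fin 2) (Fin 2 × Fin 2) ℂ) - outer mePhi) := by
  ext ⟨a,b⟩ ⟨c,d⟩
  simp only [PT1, pauliTestOp, outer, mePhi, singlet, Matrix.of_apply, Matrix.smul_apply,
    Matrix.add_apply, Matrix.sub_apply, Matrix.one_apply, Pi.smul_apply, smul_eq_mul,
    Prod.mk.injEq, Prod.ext_iff]
  fin_cases a <;> fin_cases b <;> fin_cases c <;> fin_cases d <;>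
    simp [star_sqrt2_inv, sqrt2_inv_sq] <;> norm_num [sqrt2_inv_sq]

lemma ofReal_nonneg' {x : ℝ} (hx : 0 ≤ x) : (0:ℂ) ≤ (x:ℂ) := by
  rw [Complex.zero_le_real]; exact hx

lemma pauliTestOp_psd : pauliTestOp.PosSemidef := by
  refine psd_csmul (Matrix.PosSemidef.add ?_ ?_) ?_
  · exact Matrix.PosSemidef.one
  · exact psd_csmul (outer_psd singlet) (by simp [Complex.nonneg_iff])
  · rw [Complex.nonneg_iff]; norm_num

lemma one_sub_pauliTestOp_psd :
    ((1 : Matrix (Fin 2 × Fin 2) (Fin 2 × Fin 2) ℂ) - pauliTestOp).PosSemidef := by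
  have h : (1 : Matrix (Fin 2 × Fin 2) (Fin 2 × Fin 2) ℂ) - pauliTestOp
      = (2/3 : ℂ) • ((1 : Matrix (Fin 2 × Fin 2) (Fin 2 × Fin 2) ℂ) - outer singlet) := by
    rw [pauliTestOp]
    ext i j
    simp only [Matrix.sub_apply, Matrix.smul_apply, Matrix.add_apply, smul_eq_mul]
    ring
  rw [h]
  exact psd_csmul (one_sub_outer_psd singlet_unit) (by rw [Complex.nonneg_iff]; norm_num)

lemma trace_M_P : (pauliTestOp * outer singlet).trace = 1 := by
  rw [pauliTestOp, smul_mul_assoc, add_mul, one_mul, smul_mul_assoc,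
    outer_mul_self singlet_unit, trace_smul, trace_add, trace_smul,
    trace_outer singlet_unit]
  norm_num

lemma psd_sum {a : Type*} [Fintype a] [DecidableEq a] {m : ℕ}
    (f : Fin m → Matrix a a ℂ) (hf : ∀ y, (f y).PosSemidef) :
    (∑ y, f y).PosSemidef := by
  induction m with
  | zero => simpa using Matrix.PosSemidef.zero
  | succ m ih =>
      rw [Fin.sum_univ_succ]
      exact Matrix.PosSemidef.add (hf 0) (ih _ (fun y => hf y.succ))

def PTn {n : ℕ} (A : Matrix (Fin n → Fin 2 × Fin 2) (Fin n → Fin 2 × Fin 2) ℂ) :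
    Matrix (Fin n → Fin 2 × Fin 2) (Fin n → Fin 2 × Fin 2) ℂ :=
  Matrix.of fun x y => A (fun i => ((x i).1, (y i).2)) (fun i => ((y i).1, (x i).2))

lemma PTn_tensorPow (n : ℕ) (A : Matrix (Fin 2 × Fin 2) (Fin 2 × Fin 2) ℂ) :
    PTn (tensorPow n A) = tensorPow n (PT1 A) := rfl

lemma trace_PTn {n : ℕ} (A : Matrix (Fin n → Fin 2 × Fin 2) (Fin n → Fin 2 × Fin 2) ℂ) :
    (PTn A).trace = A.trace := by
  unfold Matrix.trace
  apply Finset.sum_congr rfl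
  intro x _
  simp [Matrix.diag, PTn]

def ptPairEquiv (n : ℕ) :
    ((Fin n → Fin 2 × Fin 2) × (Fin n → Fin 2 × Fin 2))
      ≃ ((Fin n → Fin 2 × Fin 2) × (Fin n → Fin 2 × Fin 2)) where
  toFun p := (fun i => ((p.1 i).1, (p.2 i).2), fun i => ((p.2 i).1, (p.1 i).2))
  invFun p := (fun i => ((p.1 i).1, (p.2 i).2), fun i => ((p.2 i).1, (p.1 i).2))
  left_inv p := by simp
  right_inv p := by simp

lemma trace_PTn_mul {n : ℕ}
    (A B : Matrix (Fin n → Fin 2 × Fin 2) (Fin n → Fin 2 × Fin 2) ℂ) :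
    (PTn A * PTn B).trace = (A * B).trace := by
  have h1 : ∀ (C D : Matrix (Fin n → Fin 2 × Fin 2) (Fin n → Fin 2 × Fin 2) ℂ),
      (C * D).trace = ∑ p : (Fin n → Fin 2 × Fin 2) × (Fin n → Fin 2 × Fin 2),
        C p.1 p.2 * D p.2 p.1 := by
    intro C D
    rw [Fintype.sum_prod_type]
    simp [Matrix.trace, Matrix.diag, Matrix.mul_apply]
  rw [h1, h1]
  exact Fintype.sum_equiv (ptPairEquiv n) _ _ (fun p => rfl)

def splitEquiv (n : ℕ) :
    (Fin n → Fin 2 × Fin 2) ≃ ((Fin n → Fin 2) × (Fin n → Fin 2)) where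
  toFun u := (fun i => (u i).1, fun i => (u i).2)
  invFun p := fun i => (p.1 i, p.2 i)
  left_inv u := by funext i; simp
  right_inv p := by simp

lemma PTn_sep_psd {n : ℕ} {σ : Matrix (Fin n → Fin 2 × Fin 2) (Fin n → Fin 2 × Fin 2) ℂ}
    (hsep : SeparableState (regroup σ)) : (PTn σ).PosSemidef := by
  obtain ⟨m, p, σA, σB, hp0, hp1, hA, hB, heq⟩ := hsep
  have hσ : ∀ u v, σ u v = ∑ z, (p z : ℂ) *
      (σA z (fun i => (u i).1) (fun i => (v i).1)
        * σB z (fun i => (u i).2) (fun i => (v i).2)) := by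
    intro u v
    have h1 : σ u v = regroup σ (fun i => (u i).1, fun i => (u i).2)
        (fun i => (v i).1, fun i => (v i).2) := by
      simp [regroup]
    rw [h1, heq]
    simp [Matrix.sum_apply, kroneckerMap_apply]
  have key : PTn σ
      = (∑ z, (p z : ℂ) • (σA z ⊗ₖ (σB z)ᵀ)).submatrix (splitEquiv n) (splitEquiv n) := by
    ext x y
    simp only [PTn, Matrix.of_apply, Matrix.submatrix_apply, Matrix.sum_apply,
      Matrix.smul_apply, kroneckerMap_apply, Matrix.transpose_apply, smul_eq_mul,
      splitEquiv, Equiv.coe_fn_mk]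
    rw [hσ]
  rw [key]
  refine Matrix.PosSemidef.submatrix ?_ _
  refine psd_sum _ (fun z => ?_)
  exact psd_csmul (psd_kron (hA z).1 ((hB z).1.transpose)) (ofReal_nonneg' (hp0 z))

section tn
variable {F : Type*} [Fintype F] [DecidableEq F]

lemma trace_mul_diagonal' (G : Matrix F F ℂ) (f : F → ℂ) :
    (G * Matrix.diagonal f).trace = ∑ i, G i i * f i := by
  simp [Matrix.trace, Matrix.diag, Matrix.mul_apply, Matrix.diagonal_apply, Finset.sum_ite_eq]

lemma traceNorm_bound (P ρ σ : Matrix F F ℂ) (hP : P.PosSemidef)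
    (hP1 : ((1 : Matrix F F ℂ) - P).PosSemidef)
    (hρ : IsState ρ) (hσ : IsState σ) :
    2 * ((P * (ρ - σ)).trace).re ≤ traceNorm (ρ - σ) := by
  set X := ρ - σ with hXdef
  have hX : X.IsHermitian := hρ.1.1.sub hσ.1.1
  set U : Matrix F F ℂ := (hX.eigenvectorUnitary : Matrix F F ℂ) with hUdef
  set d : F → ℝ := hX.eigenvalues with hddef
  have hUU : star U * U = 1 := Matrix.mem_unitaryGroup_iff'.mp hX.eigenvectorUnitary.2
  have hspec : X = U * Matrix.diagonal (fun i => (d i : ℂ)) * star U :=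
    hX.spectral_theorem
  set S : Matrix F F ℂ := U * Matrix.diagonal (fun i => ((|d i| : ℝ) : ℂ)) * star U with hSdef
  have hdiagpsd : (Matrix.diagonal (fun i => ((|d i| : ℝ) : ℂ))).PosSemidef :=
    Matrix.posSemidef_diagonal_iff.mpr fun i => ofReal_nonneg' (abs_nonneg _)
  have hS : S.PosSemidef := by
    have := hdiagpsd.mul_mul_conjTranspose_same U
    rwa [← Matrix.star_eq_conjTranspose] at this
  have assoc : ∀ D E : Matrix F F ℂ,
      (U * D * star U) * (U * E * star U) = U * (D * E) * star U := by
    intro D E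
    simp only [← Matrix.mul_assoc]
    rw [Matrix.mul_assoc (U * D) (star U) U, hUU, Matrix.mul_one]
  have trace_conj : ∀ D : Matrix F F ℂ, (U * D * star U).trace = D.trace := by
    intro D
    rw [Matrix.trace_mul_comm, ← Matrix.mul_assoc, hUU, Matrix.one_mul]
  have hdd : (fun i => ((|d i| : ℝ) : ℂ) * ((|d i| : ℝ) : ℂ))
      = fun i => ((d i : ℝ) : ℂ) * ((d i : ℝ) : ℂ) := by
    funext i
    rw [← Complex.ofReal_mul, ← Complex.ofReal_mul, abs_mul_abs_self]
  have hS2 : S ^ 2 = Xᴴ * X := by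
    rw [hX.eq, hspec, pow_two, hSdef, assoc, assoc, Matrix.diagonal_mul_diagonal,
      Matrix.diagonal_mul_diagonal, hdd]
  have hsqrt : S = CFC.sqrt (Xᴴ * X) :=
    ((CFC.sqrt_eq_iff _ _ (posSemidef_conjTranspose_mul_self X).nonneg hS.nonneg).mpr
      (by rw [← pow_two]; exact hS2)).symm
  have htn : traceNorm X = ∑ i, |d i| := by
    have hTN : traceNorm X = ((CFC.sqrt (Xᴴ * X)).trace).re := by
      rw [traceNorm, CFC.sqrt_eq_real_sqrt _ (posSemidef_conjTranspose_mul_self X).nonneg,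
        cfcₙ_eq_cfc (hf0 := Real.sqrt_zero), (posSemidef_conjTranspose_mul_self X).1.cfc_eq, IsHermitian.cfc,
        Unitary.conjStarAlgAut_apply]
      rfl
    rw [hTN, ← hsqrt, hSdef, trace_conj, Matrix.trace_diagonal,
      ← Complex.ofReal_sum]
    exact Complex.ofReal_re _
  have htrX : X.trace = 0 := by
    rw [hXdef, Matrix.trace_sub, hρ.2, hσ.2, sub_self]
  have hsumd : ∑ i, d i = 0 := by
    have h1 : X.trace = ∑ i, (d i : ℂ) := by
      rw [hspec, trace_conj, Matrix.trace_diagonal]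
    rw [htrX] at h1
    have h2 := congrArg Complex.re h1
    rw [← Complex.ofReal_sum] at h2
    simpa using h2.symm
  set G : Matrix F F ℂ := star U * P * U with hGdef
  have hG : G.PosSemidef := by
    have := hP.conjTranspose_mul_mul_same U
    rwa [← Matrix.star_eq_conjTranspose] at this
  have hG1 : ((1 : Matrix F F ℂ) - G).PosSemidef := by
    have h2 := hP1.conjTranspose_mul_mul_same U
    rw [← Matrix.star_eq_conjTranspose] at h2
    have h3 : star U * ((1 : Matrix F F ℂ) - P) * U = 1 - G := by
      rw [Matrix.mul_sub, Matrix.mul_one, Matrix.sub_mul, hUU, hGdef]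
    rwa [h3] at h2
  set γ : F → ℝ := fun i => (G i i).re with hγdef
  have hγ0 : ∀ i, 0 ≤ γ i := fun i => (Complex.nonneg_iff.mp (psd_diag_nonneg hG i)).1
  have hγim : ∀ i, (G i i).im = 0 := fun i =>
    ((Complex.nonneg_iff.mp (psd_diag_nonneg hG i)).2).symm
  have hγ1 : ∀ i, γ i ≤ 1 := by
    intro i
    have := (Complex.nonneg_iff.mp (psd_diag_nonneg hG1 i)).1
    simpa [hγdef, Matrix.sub_apply, Matrix.one_apply] using this
  have htrPX : ((P * X).trace).re = ∑ i, d i * γ i := by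
    have h1 : (P * X).trace = (G * Matrix.diagonal (fun i => (d i : ℂ))).trace := by
      rw [hspec, hGdef]
      simp only [← Matrix.mul_assoc]
      rw [Matrix.trace_mul_comm]
      simp only [Matrix.mul_assoc]
    rw [h1, trace_mul_diagonal', Complex.re_sum]
    apply Finset.sum_congr rfl
    intro i _
    rw [Complex.mul_re]
    simp [hγim i, hγdef, mul_comm]
  rw [htrPX, htn]
  have expand : ∑ i, (d i * (2 * γ i - 1)) = 2 * (∑ i, d i * γ i) - ∑ i, d i := by
    rw [Finset.mul_sum, ← Finset.sum_sub_distrib]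
    apply Finset.sum_congr rfl
    intro i _
    ring
  have hle : ∑ i, d i * (2 * γ i - 1) ≤ ∑ i, |d i| := by
    refine Finset.sum_le_sum fun i _ => ?_
    have h1 : |2 * γ i - 1| ≤ 1 := abs_le.mpr ⟨by linarith [hγ0 i], by linarith [hγ1 i]⟩
    calc d i * (2 * γ i - 1) ≤ |d i * (2 * γ i - 1)| := le_abs_self _
      _ = |d i| * |2 * γ i - 1| := abs_mul _ _
      _ ≤ |d i| * 1 := mul_le_mul_of_nonneg_left h1 (abs_nonneg _)
      _ = |d i| := mul_one _
  rw [expand, hsumd, sub_zero] at hle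
  exact hle
end tn

lemma sep_bound {n : ℕ} (σ : Matrix (Fin n → Fin 2 × Fin 2) (Fin n → Fin 2 × Fin 2) ℂ)
    (hσ : IsState σ) (hsep : SeparableState (regroup σ)) :
    (tensorPow n pauliTestOp * σ).trace ≤ (((2 / 3 : ℝ) ^ n : ℝ) : ℂ) := by
  have hτ : (PTn σ).PosSemidef := PTn_sep_psd hsep
  have hτtr : (PTn σ).trace = 1 := by rw [trace_PTn, hσ.2]
  have hQ : ((1 : Matrix (Fin 2 × Fin 2) (Fin 2 × Fin 2) ℂ) - outer mePhi).PosSemidef :=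
    one_sub_outer_psd mePhi_unit
  have hQ1 : ((1 : Matrix (Fin 2 × Fin 2) (Fin 2 × Fin 2) ℂ)
      - ((1 : Matrix (Fin 2 × Fin 2) (Fin 2 × Fin 2) ℂ) - outer mePhi)).PosSemidef := by
    rw [sub_sub_cancel]
    exact outer_psd mePhi
  have h1 : (tensorPow n pauliTestOp * σ).trace
      = (PTn (tensorPow n pauliTestOp) * PTn σ).trace := (trace_PTn_mul _ _).symm
  rw [h1, PTn_tensorPow, PT1_pauliTestOp, tensorPow_smul, Matrix.smul_mul,
    Matrix.trace_smul, smul_eq_mul]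
  have hs : 0 ≤ (((1 : Matrix (Fin n → Fin 2 × Fin 2) (Fin n → Fin 2 × Fin 2) ℂ)
      - tensorPow n ((1 : Matrix (Fin 2 × Fin 2) (Fin 2 × Fin 2) ℂ) - outer mePhi))
        * PTn σ).trace :=
    psd_trace_mul_nonneg (one_sub_tensorPow_psd hQ hQ1 n) hτ
  have hexp : (((1 : Matrix (Fin n → Fin 2 × Fin 2) (Fin n → Fin 2 × Fin 2) ℂ)
      - tensorPow n ((1 : Matrix (Fin 2 × Fin 2) (Fin 2 × Fin 2) ℂ) - outer mePhi))
        * PTn σ).trace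
      = 1 - (tensorPow n ((1 : Matrix (Fin 2 × Fin 2) (Fin 2 × Fin 2) ℂ) - outer mePhi)
        * PTn σ).trace := by
    rw [Matrix.sub_mul, Matrix.one_mul, Matrix.trace_sub, hτtr]
  rw [hexp] at hs
  have ht : (tensorPow n ((1 : Matrix (Fin 2 × Fin 2) (Fin 2 × Fin 2) ℂ) - outer mePhi)
      * PTn σ).trace ≤ 1 := sub_nonneg.mp hs
  have hc : (0 : ℂ) ≤ (2/3 : ℂ)^n :=
    pow_nonneg (by rw [Complex.nonneg_iff]; norm_num) n
  have h2 := mul_le_mul_of_nonneg_left ht hc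
  rw [mul_one] at h2
  refine le_trans h2 ?_
  rw [show (((2 / 3 : ℝ) ^ n : ℝ) : ℂ) = (2/3 : ℂ)^n by push_cast; ring]


/-- With `M = (I₄ + 2|ψ⁻⟩⟨ψ⁻|)/3` and `Π = M^{⊗n}`:
`0 ⪯ Π ⪯ I`, `Tr(Π (|ψ⁻⟩⟨ψ⁻|)^{⊗n}) = 1`, and `Tr(Π σ) ≤ (2/3)^n` for every state `σ`
whose regrouping onto the `A:B` cut is separable; consequently
`‖(|ψ⁻⟩⟨ψ⁻|)^{⊗n} − σ‖₁ ≥ 2(1 − (2/3)^n)` for every such `σ`. -/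
theorem stmt5 (n : ℕ) (hn : 1 ≤ n) :
    (tensorPow n pauliTestOp).PosSemidef ∧
    ((1 : Matrix (Fin n → Fin 2 × Fin 2) (Fin n → Fin 2 × Fin 2) ℂ)
        - tensorPow n pauliTestOp).PosSemidef ∧
    (tensorPow n pauliTestOp * tensorPow n (outer singlet)).trace = 1 ∧
    (∀ σ : Matrix (Fin n → Fin 2 × Fin 2) (Fin n → Fin 2 × Fin 2) ℂ,
      IsState σ → SeparableState (regroup σ) →
      (tensorPow n pauliTestOp * σ).trace ≤ (((2 / 3 : ℝ) ^ n : ℝ) : ℂ)) ∧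
    (∀ σ : Matrix (Fin n → Fin 2 × Fin 2) (Fin n → Fin 2 × Fin 2) ℂ,
      IsState σ → SeparableState (regroup σ) →
      2 * (1 - (2 / 3 : ℝ) ^ n) ≤ traceNorm (tensorPow n (outer singlet) - σ)) := by
  refine ⟨tensorPow_psd pauliTestOp_psd n,
    one_sub_tensorPow_psd pauliTestOp_psd one_sub_pauliTestOp_psd n, ?_, sep_bound, ?_⟩
  · rw [trace_tensorPow_mul, trace_M_P, one_pow]
  · intro σ hσ hsep
    have hρ : IsState (tensorPow n (outer singlet)) :=
      ⟨tensorPow_psd (outer_psd singlet) n,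
        by rw [trace_tensorPow, trace_outer singlet_unit, one_pow]⟩
    have hbound := traceNorm_bound (tensorPow n pauliTestOp) _ σ
      (tensorPow_psd pauliTestOp_psd n)
      (one_sub_tensorPow_psd pauliTestOp_psd one_sub_pauliTestOp_psd n) hρ hσ
    have h3 : (tensorPow n pauliTestOp * (tensorPow n (outer singlet) - σ)).trace
        = 1 - (tensorPow n pauliTestOp * σ).trace := by
      rw [Matrix.mul_sub, Matrix.trace_sub, trace_tensorPow_mul, trace_M_P, one_pow]
    have h4 := sep_bound σ hσ hsep
    have h5 : ((tensorPow n pauliTestOp * σ).trace).re ≤ (2/3 : ℝ)^n := by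
      have h := (Complex.le_def.mp h4).1
      rwa [Complex.ofReal_re] at h
    have h6 : 1 - (2/3 : ℝ)^n ≤ ((tensorPow n pauliTestOp
        * (tensorPow n (outer singlet) - σ)).trace).re := by
      rw [h3, Complex.sub_re, Complex.one_re]
      linarith
    linarith
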